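/- Theorem (existence and uniqueness for discrete gradient methods). Let B be a bounded set in ℝ^d and suppose there exist positive constants R, L, H such that for each x ∈ B, all u,v,w ∈ B_R(x) and h ∈ [0,H): f̃ satisfies f̃(x,x,0) = f(x), |f̃(u,v,h) − f̃(w,v,h)| ≤ L|u−w|, |f̃(u,v,h) − f̃(u,w,h)| ≤ L|v−w|, |f̃(x,x,h) − f̃(x,x,0)| ≤ Lh|i(x)|; ī is a discrete gradient of I with ī(x,x) = i(x), |ī(u,v) − ī(w,v)| ≤ L|u−w|, |ī(u,v) − ī(u,w)| ≤ L|v−w|; and each of ĩ, î, ĭ satisfies ĩ(x,x,0) = i(x), |ĩ(u,v,h) − ĩ(w,v,h)| ≤ L|u−w|, |ĩ(u,v,h) − ĩ(u,w,h)| ≤ L|v−w|, |ĩ(x,x,h) − ĩ(x,x,0)| ≤ Lh|i(x)|. Define R' := max{R, 10L} and H' := min{H, 1/(10L), 1/(6C₂R'), 1/((36C₂+6)L)}. Then for each x ∈ B and h ∈ [0,H') there exists a unique x' ∈ B_{R'}(x) satisfying: x' = x + h S̃(x,x',h) ī(x,x') if i(x) ≠ 0, and x' = x if i(x) = 0, where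 S̃(x,x',h) := (f̃(x,x',h) ĩ(x,x',h)ᵀ − ĩ(x,x',h) f̃(x,x',h)ᵀ)/(î(x,x',h) · ĭ(x,x',h)). -/

import Mathlib

open scoped RealInnerProductSpace

noncomputable section

/-- Membership in the ball `B_R(x) = {z : ‖z − x‖ ≤ ‖i x‖ / R}`. -/
def InBall {d : ℕ} (i : EuclideanSpace ℝ (Fin d) → EuclideanSpace ℝ (Fin d)) (R : ℝ)
    (x z : EuclideanSpace ℝ (Fin d)) : Prop :=
  ‖z - x‖ ≤ ‖i x‖ / R

/-- The consistency and local Lipschitz conditions at the point `x` for an approximation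
`g(·,·,·)` of `target` (conditions (11z)/(12z) of the paper, with balls measured via `i`). -/
def ConsistAt {d : ℕ} (i target : EuclideanSpace ℝ (Fin d) → EuclideanSpace ℝ (Fin d))
    (x : EuclideanSpace ℝ (Fin d)) (R L H : ℝ)
    (g : EuclideanSpace ℝ (Fin d) → EuclideanSpace ℝ (Fin d) → ℝ → EuclideanSpace ℝ (Fin d)) :
    Prop :=
  g x x 0 = target x ∧
    ∀ h : ℝ, 0 ≤ h → h < H →
      (∀ u v w, InBall i R x u → InBall i R x v → InBall i R x w →
        ‖g u v h - g w v h‖ ≤ L * ‖u - w‖ ∧ ‖g u v h - g u w h‖ ≤ L * ‖v - w‖) ∧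
      ‖g x x h - g x x 0‖ ≤ L * h * ‖i x‖

/-- The discrete gradient step equation `x' = x + h S̃(x,x',h) ī(x,x')`, where
`S̃ = (f̃ ĩᵀ − ĩ f̃ᵀ)/(î·ĭ)`, so that
`S̃ ī = ((ĩ·ī) f̃ − (f̃·ī) ĩ)/(î·ĭ)`. -/
def DGEq {d : ℕ}
    (ftil itil ihat ibrev :
      EuclideanSpace ℝ (Fin d) → EuclideanSpace ℝ (Fin d) → ℝ → EuclideanSpace ℝ (Fin d))
    (ibar : EuclideanSpace ℝ (Fin d) → EuclideanSpace ℝ (Fin d) → EuclideanSpace ℝ (Fin d))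
    (x : EuclideanSpace ℝ (Fin d)) (h : ℝ) (x' : EuclideanSpace ℝ (Fin d)) : Prop :=
  x' = x + (h / ⟪ihat x x' h, ibrev x x' h⟫) •
    (⟪itil x x' h, ibar x x'⟫ • ftil x x' h - ⟪ftil x x' h, ibar x x'⟫ • itil x x' h)

section Aux

variable {d : ℕ}

lemma aux_smul_inner (a b c : EuclideanSpace ℝ (Fin d)) :
    ‖(⟪a,b⟫ : ℝ) • c‖ ≤ ‖a‖ * ‖b‖ * ‖c‖ := by
  rw [norm_smul, Real.norm_eq_abs]
  exact mul_le_mul_of_nonneg_right (abs_real_inner_le_norm a b) (norm_nonneg c)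

lemma aux_mul3 {p q r P Q S : ℝ} (hp : 0 ≤ p) (hq : 0 ≤ q) (hr : 0 ≤ r)
    (h1 : p ≤ P) (h2 : q ≤ Q) (h3 : r ≤ S) : p * q * r ≤ P * Q * S :=
  mul_le_mul (mul_le_mul h1 h2 hq (le_trans hp h1)) h3 hr
    (mul_nonneg (le_trans hp h1) (le_trans hq h2))

lemma aux_leading (φ ι : EuclideanSpace ℝ (Fin d)) :
    ‖(‖ι‖^2 : ℝ) • φ - (⟪φ,ι⟫ : ℝ) • ι‖ ≤ ‖ι‖^2 * ‖φ‖ := by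
  set L0 : EuclideanSpace ℝ (Fin d) := (‖ι‖^2 : ℝ) • φ - (⟪φ,ι⟫ : ℝ) • ι with hL0
  have horth : (⟪L0, ι⟫ : ℝ) = 0 := by
    simp only [hL0, inner_sub_left, real_inner_smul_left, real_inner_self_eq_norm_sq]
    ring_nf
  have h1 : (⟪L0, L0⟫ : ℝ) = ‖ι‖^2 * ⟪L0, φ⟫ - ⟪φ,ι⟫ * ⟪L0, ι⟫ := by
    nth_rewrite 2 [hL0]
    simp only [inner_sub_right, real_inner_smul_right]
  rw [horth, mul_zero, sub_zero, real_inner_self_eq_norm_sq] at h1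
  have h2 : (⟪L0, φ⟫ : ℝ) ≤ ‖L0‖ * ‖φ‖ := real_inner_le_norm L0 φ
  have h3 : ‖L0‖^2 ≤ ‖ι‖^2 * (‖L0‖ * ‖φ‖) := by
    rw [h1]; exact mul_le_mul_of_nonneg_left h2 (sq_nonneg _)
  nlinarith [norm_nonneg L0, mul_nonneg (sq_nonneg ‖ι‖) (norm_nonneg φ)]

lemma aux_norm_le {v w : EuclideanSpace ℝ (Fin d)} {c : ℝ} (h : ‖v - w‖ ≤ c) :
    ‖v‖ ≤ ‖w‖ + c := by
  have := norm_sub_norm_le v w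
  linarith

end Aux

set_option maxHeartbeats 2000000 in
/-- Theorem: existence and uniqueness for discrete gradient methods. -/
theorem discrete_gradient_exists_unique {d : ℕ}
    (f : EuclideanSpace ℝ (Fin d) → EuclideanSpace ℝ (Fin d))
    (I : EuclideanSpace ℝ (Fin d) → ℝ)
    (i : EuclideanSpace ℝ (Fin d) → EuclideanSpace ℝ (Fin d))
    (hgrad : ∀ x, HasGradientAt I (i x) x)
    (B : Set (EuclideanSpace ℝ (Fin d))) (hB : Bornology.IsBounded B)
    (C₁ : ℝ) (hC₁ : 0 < C₁) (hfC : ∀ x ∈ B, ‖f x‖ ≤ C₁ * ‖i x‖)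
    (R L H : ℝ) (hR : 0 < R) (hL : 0 < L) (hH : 0 < H)
    (ftil itil ihat ibrev :
      EuclideanSpace ℝ (Fin d) → EuclideanSpace ℝ (Fin d) → ℝ → EuclideanSpace ℝ (Fin d))
    (ibar : EuclideanSpace ℝ (Fin d) → EuclideanSpace ℝ (Fin d) → EuclideanSpace ℝ (Fin d))
    (hftil : ∀ x ∈ B, ConsistAt i f x R L H ftil)
    (hitil : ∀ x ∈ B, ConsistAt i i x R L H itil)
    (hihat : ∀ x ∈ B, ConsistAt i i x R L H ihat)
    (hibrev : ∀ x ∈ B, ConsistAt i i x R L H ibrev)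
    (hibar_cont : Continuous (fun q : EuclideanSpace ℝ (Fin d) × EuclideanSpace ℝ (Fin d) =>
      ibar q.1 q.2))
    (hibar_dg : ∀ x x' : EuclideanSpace ℝ (Fin d), ⟪ibar x x', x' - x⟫ = I x' - I x)
    (hibar_diag : ∀ x : EuclideanSpace ℝ (Fin d), ibar x x = i x)
    (hibar_lip : ∀ x ∈ B, ∀ u v w : EuclideanSpace ℝ (Fin d),
      InBall i R x u → InBall i R x v → InBall i R x w →
      ‖ibar u v - ibar w v‖ ≤ L * ‖u - w‖ ∧ ‖ibar u v - ibar u w‖ ≤ L * ‖v - w‖)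
    (R' H' : ℝ) (hR' : R' = max R (10 * L))
    (hH' : H' = min H (min (1 / (10 * L))
      (min (1 / (6 * (C₁ + 1/5) * R')) (1 / ((36 * (C₁ + 1/5) + 6) * L)))))
    :
    ∀ x ∈ B, ∀ h : ℝ, 0 ≤ h → h < H' →
      ∃! x' : EuclideanSpace ℝ (Fin d), InBall i R' x x' ∧
        ((i x ≠ 0 → DGEq ftil itil ihat ibrev ibar x h x') ∧ (i x = 0 → x' = x)) := by
  intro x hx h h0 hhH'
  have hRR' : R ≤ R' := by rw [hR']; exact le_max_left _ _
  have hLR' : 10 * L ≤ R' := by rw [hR']; exact le_max_right _ _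
  have hR'pos : 0 < R' := lt_of_lt_of_le hR hRR'
  by_cases hiz : i x = 0
  · refine ⟨x, ⟨?_, fun hc => absurd hiz hc, fun _ => rfl⟩, ?_⟩
    · show ‖x - x‖ ≤ ‖i x‖ / R'
      simp [hiz]
    · rintro y ⟨hy, -⟩
      have hy' : ‖y - x‖ ≤ 0 := by
        have : ‖y - x‖ ≤ ‖i x‖ / R' := hy
        simpa [hiz] using this
      have : y - x = 0 := norm_eq_zero.mp (le_antisymm hy' (norm_nonneg _))
      exact sub_eq_zero.mp this
  -- main case
  have hm : 0 < ‖i x‖ := norm_pos_iff.mpr hiz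
  have hC₂ : (0:ℝ) < C₁ + 1/5 := by linarith
  rw [hH', lt_min_iff, lt_min_iff, lt_min_iff] at hhH'
  obtain ⟨hhH, hh10L, hh6, hh36⟩ := hhH'
  have hh10L' : h * (10 * L) < 1 :=
    (lt_div_iff₀ (by linarith : (0:ℝ) < 10 * L)).mp hh10L
  have hh6' : h * (6 * (C₁ + 1/5) * R') < 1 :=
    (lt_div_iff₀ (mul_pos (mul_pos (by norm_num) hC₂) hR'pos)).mp hh6
  have hh36' : h * ((36 * (C₁ + 1/5) + 6) * L) < 1 :=
    (lt_div_iff₀ (mul_pos (by linarith) hL)).mp hh36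
  have hm2 : (0:ℝ) < 14/25 * ‖i x‖^2 := mul_pos (by norm_num) (pow_pos hm 2)
  have hxball : InBall i R x x := by
    show ‖x - x‖ ≤ ‖i x‖ / R
    simp
    exact div_nonneg (norm_nonneg _) hR.le
  have hball : ∀ u : EuclideanSpace ℝ (Fin d), ‖u - x‖ ≤ ‖i x‖ / R' → InBall i R x u := by
    intro u hu
    exact le_trans hu (div_le_div_of_nonneg_left hm.le hR hRR')
  have hmR10 : ‖i x‖ / R' ≤ ‖i x‖ / (10 * L) :=
    div_le_div_of_nonneg_left hm.le (by linarith : (0:ℝ) < 10 * L) hLR'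
  -- closeness of the approximations to their targets on the ball, at (x, u, h)
  have hclose : ∀ (g : EuclideanSpace ℝ (Fin d) → EuclideanSpace ℝ (Fin d) → ℝ →
        EuclideanSpace ℝ (Fin d)) (tgt : EuclideanSpace ℝ (Fin d) → EuclideanSpace ℝ (Fin d)),
      ConsistAt i tgt x R L H g →
      ∀ u : EuclideanSpace ℝ (Fin d), ‖u - x‖ ≤ ‖i x‖ / R' →
        ‖g x u h - tgt x‖ ≤ ‖i x‖ / 5 := by
    rintro g tgt ⟨hg0, hgrest⟩ u hu
    obtain ⟨hlip, ht⟩ := hgrest h h0 hhH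
    have h1 : ‖g x u h - g x x h‖ ≤ L * ‖u - x‖ := (hlip x u x hxball (hball u hu) hxball).2
    have h2 : ‖g x u h - tgt x‖ ≤ ‖g x u h - g x x h‖ + ‖g x x h - g x x 0‖ := by
      rw [show g x u h - tgt x = (g x u h - g x x h) + (g x x h - g x x 0) by rw [hg0]; abel]
      exact norm_add_le _ _
    have h3 : L * ‖u - x‖ ≤ ‖i x‖ / 10 := by
      have := mul_le_mul_of_nonneg_left (le_trans hu hmR10) hL.le
      calc L * ‖u - x‖ ≤ L * (‖i x‖ / (10 * L)) := this
        _ = ‖i x‖ / 10 := by field_simp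
    have h4 : L * h * ‖i x‖ ≤ ‖i x‖ / 10 := by nlinarith
    linarith
  -- Lipschitz in the second argument at (x, ·, h)
  have hlip2 : ∀ (g : EuclideanSpace ℝ (Fin d) → EuclideanSpace ℝ (Fin d) → ℝ →
        EuclideanSpace ℝ (Fin d)) (tgt : EuclideanSpace ℝ (Fin d) → EuclideanSpace ℝ (Fin d)),
      ConsistAt i tgt x R L H g →
      ∀ u v : EuclideanSpace ℝ (Fin d), ‖u - x‖ ≤ ‖i x‖ / R' → ‖v - x‖ ≤ ‖i x‖ / R' →
        ‖g x u h - g x v h‖ ≤ L * ‖u - v‖ :=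
    fun g tgt hc u v hu hv =>
      ((hc.2 h h0 hhH).1 x u v hxball (hball u hu) (hball v hv)).2
  have hibarc : ∀ u : EuclideanSpace ℝ (Fin d), ‖u - x‖ ≤ ‖i x‖ / R' →
      ‖ibar x u - i x‖ ≤ ‖i x‖ / 10 := by
    intro u hu
    have h1 : ‖ibar x u - ibar x x‖ ≤ L * ‖u - x‖ :=
      (hibar_lip x hx x u x hxball (hball u hu) hxball).2
    rw [hibar_diag] at h1
    calc ‖ibar x u - i x‖ ≤ L * ‖u - x‖ := h1
      _ ≤ L * (‖i x‖ / (10 * L)) := mul_le_mul_of_nonneg_left (le_trans hu hmR10) hL.le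
      _ = ‖i x‖ / 10 := by field_simp
  have hibarlip2 : ∀ u v : EuclideanSpace ℝ (Fin d),
      ‖u - x‖ ≤ ‖i x‖ / R' → ‖v - x‖ ≤ ‖i x‖ / R' → ‖ibar x u - ibar x v‖ ≤ L * ‖u - v‖ :=
    fun u v hu hv => (hibar_lip x hx x u v hxball (hball u hu) (hball v hv)).2
  -- the fixed point map
  set Φ : EuclideanSpace ℝ (Fin d) → EuclideanSpace ℝ (Fin d) := fun u =>
    x + (h / ⟪ihat x u h, ibrev x u h⟫) •
      (⟪itil x u h, ibar x u⟫ • ftil x u h - ⟪ftil x u h, ibar x u⟫ • itil x u h) with hΦdef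
  -- lower bound on the denominator
  have hD : ∀ u : EuclideanSpace ℝ (Fin d), ‖u - x‖ ≤ ‖i x‖ / R' →
      14/25 * ‖i x‖^2 ≤ ⟪ihat x u h, ibrev x u h⟫ := by
    intro u hu
    have ha := hclose ihat i (hihat x hx) u hu
    have hb := hclose ibrev i (hibrev x hx) u hu
    have hna : ‖ihat x u h‖ ≤ ‖i x‖ + ‖i x‖/5 := aux_norm_le ha
    have e1 : (⟪ihat x u h, ibrev x u h⟫ : ℝ)
        = ‖i x‖^2 + ⟪ihat x u h - i x, i x⟫ + ⟪ihat x u h, ibrev x u h - i x⟫ := by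
      simp only [inner_sub_left, inner_sub_right, real_inner_self_eq_norm_sq]
      ring
    have e2 : |(⟪ihat x u h - i x, i x⟫ : ℝ)| ≤ (‖i x‖/5) * ‖i x‖ :=
      le_trans (abs_real_inner_le_norm _ _)
        (mul_le_mul_of_nonneg_right ha (norm_nonneg _))
    have e3 : |(⟪ihat x u h, ibrev x u h - i x⟫ : ℝ)| ≤ (‖i x‖ + ‖i x‖/5) * (‖i x‖/5) :=
      le_trans (abs_real_inner_le_norm _ _)
        (mul_le_mul hna hb (norm_nonneg _) (by positivity))
    have e2' := abs_le.mp e2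
    have e3' := abs_le.mp e3
    rw [e1]
    nlinarith [hm]
  -- upper bound on the numerator
  have hN : ∀ u : EuclideanSpace ℝ (Fin d), ‖u - x‖ ≤ ‖i x‖ / R' →
      ‖(⟪itil x u h, ibar x u⟫ : ℝ) • ftil x u h - (⟪ftil x u h, ibar x u⟫ : ℝ) • itil x u h‖
        ≤ (41/25 * C₁ + 66/125) * ‖i x‖^3 := by
    intro u hu
    have hda : ‖itil x u h - i x‖ ≤ ‖i x‖/5 := hclose itil i (hitil x hx) u hu
    have hdb : ‖ibar x u - i x‖ ≤ ‖i x‖/10 := hibarc u hu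
    have hdc : ‖ftil x u h - f x‖ ≤ ‖i x‖/5 := hclose ftil f (hftil x hx) u hu
    have hfx : ‖f x‖ ≤ C₁ * ‖i x‖ := hfC x hx
    have hna : ‖itil x u h‖ ≤ 6/5 * ‖i x‖ := by
      have := aux_norm_le hda; linarith
    have hnb : ‖ibar x u‖ ≤ 11/10 * ‖i x‖ := by
      have := aux_norm_le hdb; linarith
    have hnc : ‖ftil x u h‖ ≤ (C₁ + 1/5) * ‖i x‖ := by
      have := aux_norm_le hdc; linarith
    have key : (⟪itil x u h, ibar x u⟫ : ℝ) • ftil x u h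
          - (⟪ftil x u h, ibar x u⟫ : ℝ) • itil x u h =
        ((‖i x‖^2 : ℝ) • f x - (⟪f x, i x⟫ : ℝ) • i x)
        + ((⟪itil x u h - i x, ibar x u⟫ : ℝ) • ftil x u h
          + (⟪i x, ibar x u - i x⟫ : ℝ) • ftil x u h
          + (‖i x‖^2 : ℝ) • (ftil x u h - f x))
        - ((⟪ftil x u h - f x, ibar x u⟫ : ℝ) • itil x u h
          + (⟪f x, ibar x u - i x⟫ : ℝ) • itil x u h
          + (⟪f x, i x⟫ : ℝ) • (itil x u h - i x)) := by
      simp only [inner_sub_left, inner_sub_right, real_inner_self_eq_norm_sq]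
      module
    have t0 : ‖(‖i x‖^2 : ℝ) • f x - (⟪f x, i x⟫ : ℝ) • i x‖ ≤ C₁ * ‖i x‖^3 := by
      refine le_trans (aux_leading (f x) (i x)) ?_
      calc ‖i x‖^2 * ‖f x‖ ≤ ‖i x‖^2 * (C₁ * ‖i x‖) :=
            mul_le_mul_of_nonneg_left hfx (sq_nonneg _)
        _ = C₁ * ‖i x‖^3 := by ring
    have t1 : ‖(⟪itil x u h - i x, ibar x u⟫ : ℝ) • ftil x u h‖
        ≤ (‖i x‖/5) * (11/10 * ‖i x‖) * ((C₁ + 1/5) * ‖i x‖) :=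
      le_trans (aux_smul_inner _ _ _)
        (aux_mul3 (norm_nonneg _) (norm_nonneg _) (norm_nonneg _) hda hnb hnc)
    have t2 : ‖(⟪i x, ibar x u - i x⟫ : ℝ) • ftil x u h‖
        ≤ ‖i x‖ * (‖i x‖/10) * ((C₁ + 1/5) * ‖i x‖) :=
      le_trans (aux_smul_inner _ _ _)
        (aux_mul3 (norm_nonneg _) (norm_nonneg _) (norm_nonneg _) le_rfl hdb hnc)
    have t3 : ‖(‖i x‖^2 : ℝ) • (ftil x u h - f x)‖ ≤ ‖i x‖^2 * (‖i x‖/5) := by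
      rw [norm_smul, Real.norm_eq_abs, abs_of_nonneg (sq_nonneg _)]
      exact mul_le_mul_of_nonneg_left hdc (sq_nonneg _)
    have t4 : ‖(⟪ftil x u h - f x, ibar x u⟫ : ℝ) • itil x u h‖
        ≤ (‖i x‖/5) * (11/10 * ‖i x‖) * (6/5 * ‖i x‖) :=
      le_trans (aux_smul_inner _ _ _)
        (aux_mul3 (norm_nonneg _) (norm_nonneg _) (norm_nonneg _) hdc hnb hna)
    have t5 : ‖(⟪f x, ibar x u - i x⟫ : ℝ) • itil x u h‖
        ≤ (C₁ * ‖i x‖) * (‖i x‖/10) * (6/5 * ‖i x‖) :=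
      le_trans (aux_smul_inner _ _ _)
        (aux_mul3 (norm_nonneg _) (norm_nonneg _) (norm_nonneg _) hfx hdb hna)
    have t6 : ‖(⟪f x, i x⟫ : ℝ) • (itil x u h - i x)‖
        ≤ (C₁ * ‖i x‖) * ‖i x‖ * (‖i x‖/5) :=
      le_trans (aux_smul_inner _ _ _)
        (aux_mul3 (norm_nonneg _) (norm_nonneg _) (norm_nonneg _) hfx le_rfl hda)
    rw [key]
    refine le_trans (norm_sub_le _ _) ?_
    have A1 := norm_add_le ((‖i x‖^2 : ℝ) • f x - (⟪f x, i x⟫ : ℝ) • i x)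
      ((⟪itil x u h - i x, ibar x u⟫ : ℝ) • ftil x u h
        + (⟪i x, ibar x u - i x⟫ : ℝ) • ftil x u h
        + (‖i x‖^2 : ℝ) • (ftil x u h - f x))
    have A2 := norm_add_le ((⟪itil x u h - i x, ibar x u⟫ : ℝ) • ftil x u h
        + (⟪i x, ibar x u - i x⟫ : ℝ) • ftil x u h) ((‖i x‖^2 : ℝ) • (ftil x u h - f x))
    have A3 := norm_add_le ((⟪itil x u h - i x, ibar x u⟫ : ℝ) • ftil x u h)
        ((⟪i x, ibar x u - i x⟫ : ℝ) • ftil x u h)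
    have A4 := norm_add_le ((⟪ftil x u h - f x, ibar x u⟫ : ℝ) • itil x u h
        + (⟪f x, ibar x u - i x⟫ : ℝ) • itil x u h) ((⟪f x, i x⟫ : ℝ) • (itil x u h - i x))
    have A5 := norm_add_le ((⟪ftil x u h - f x, ibar x u⟫ : ℝ) • itil x u h)
        ((⟪f x, ibar x u - i x⟫ : ℝ) • itil x u h)
    nlinarith [hm, sq_nonneg (‖i x‖)]
  -- Lipschitz bound for the numerator
  have hNlip : ∀ u v : EuclideanSpace ℝ (Fin d),
      ‖u - x‖ ≤ ‖i x‖ / R' → ‖v - x‖ ≤ ‖i x‖ / R' →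
      ‖((⟪itil x u h, ibar x u⟫ : ℝ) • ftil x u h - (⟪ftil x u h, ibar x u⟫ : ℝ) • itil x u h)
        - ((⟪itil x v h, ibar x v⟫ : ℝ) • ftil x v h
          - (⟪ftil x v h, ibar x v⟫ : ℝ) • itil x v h)‖
        ≤ (23/5 * (C₁ + 1/5) + 66/25) * (L * (‖i x‖^2 * ‖u - v‖)) := by
    intro u v hu hv
    have hnau : ‖itil x u h‖ ≤ 6/5 * ‖i x‖ := by
      have := aux_norm_le (hclose itil i (hitil x hx) u hu); linarith
    have hnav : ‖itil x v h‖ ≤ 6/5 * ‖i x‖ := by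
      have := aux_norm_le (hclose itil i (hitil x hx) v hv); linarith
    have hnbu : ‖ibar x u‖ ≤ 11/10 * ‖i x‖ := by
      have := aux_norm_le (hibarc u hu); linarith
    have hnbv : ‖ibar x v‖ ≤ 11/10 * ‖i x‖ := by
      have := aux_norm_le (hibarc v hv); linarith
    have hncu : ‖ftil x u h‖ ≤ (C₁ + 1/5) * ‖i x‖ := by
      have := aux_norm_le (hclose ftil f (hftil x hx) u hu); linarith [hfC x hx]
    have hncv : ‖ftil x v h‖ ≤ (C₁ + 1/5) * ‖i x‖ := by
      have := aux_norm_le (hclose ftil f (hftil x hx) v hv); linarith [hfC x hx]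
    have hla : ‖itil x u h - itil x v h‖ ≤ L * ‖u - v‖ := hlip2 itil i (hitil x hx) u v hu hv
    have hlb : ‖ibar x u - ibar x v‖ ≤ L * ‖u - v‖ := hibarlip2 u v hu hv
    have hlc : ‖ftil x u h - ftil x v h‖ ≤ L * ‖u - v‖ := hlip2 ftil f (hftil x hx) u v hu hv
    have key : ((⟪itil x u h, ibar x u⟫ : ℝ) • ftil x u h
          - (⟪ftil x u h, ibar x u⟫ : ℝ) • itil x u h)
        - ((⟪itil x v h, ibar x v⟫ : ℝ) • ftil x v h
          - (⟪ftil x v h, ibar x v⟫ : ℝ) • itil x v h) =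
        (⟪itil x u h - itil x v h, ibar x u⟫ : ℝ) • ftil x u h
        + (⟪itil x v h, ibar x u - ibar x v⟫ : ℝ) • ftil x u h
        + (⟪itil x v h, ibar x v⟫ : ℝ) • (ftil x u h - ftil x v h)
        - ((⟪ftil x u h - ftil x v h, ibar x u⟫ : ℝ) • itil x u h
          + (⟪ftil x v h, ibar x u - ibar x v⟫ : ℝ) • itil x u h
          + (⟪ftil x v h, ibar x v⟫ : ℝ) • (itil x u h - itil x v h)) := by
      simp only [inner_sub_left, inner_sub_right]
      module
    have t1 : ‖(⟪itil x u h - itil x v h, ibar x u⟫ : ℝ) • ftil x u h‖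
        ≤ (L * ‖u - v‖) * (11/10 * ‖i x‖) * ((C₁ + 1/5) * ‖i x‖) :=
      le_trans (aux_smul_inner _ _ _)
        (aux_mul3 (norm_nonneg _) (norm_nonneg _) (norm_nonneg _) hla hnbu hncu)
    have t2 : ‖(⟪itil x v h, ibar x u - ibar x v⟫ : ℝ) • ftil x u h‖
        ≤ (6/5 * ‖i x‖) * (L * ‖u - v‖) * ((C₁ + 1/5) * ‖i x‖) :=
      le_trans (aux_smul_inner _ _ _)
        (aux_mul3 (norm_nonneg _) (norm_nonneg _) (norm_nonneg _) hnav hlb hncu)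
    have t3 : ‖(⟪itil x v h, ibar x v⟫ : ℝ) • (ftil x u h - ftil x v h)‖
        ≤ (6/5 * ‖i x‖) * (11/10 * ‖i x‖) * (L * ‖u - v‖) :=
      le_trans (aux_smul_inner _ _ _)
        (aux_mul3 (norm_nonneg _) (norm_nonneg _) (norm_nonneg _) hnav hnbv hlc)
    have t4 : ‖(⟪ftil x u h - ftil x v h, ibar x u⟫ : ℝ) • itil x u h‖
        ≤ (L * ‖u - v‖) * (11/10 * ‖i x‖) * (6/5 * ‖i x‖) :=
      le_trans (aux_smul_inner _ _ _)
        (aux_mul3 (norm_nonneg _) (norm_nonneg _) (norm_nonneg _) hlc hnbu hnau)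
    have t5 : ‖(⟪ftil x v h, ibar x u - ibar x v⟫ : ℝ) • itil x u h‖
        ≤ ((C₁ + 1/5) * ‖i x‖) * (L * ‖u - v‖) * (6/5 * ‖i x‖) :=
      le_trans (aux_smul_inner _ _ _)
        (aux_mul3 (norm_nonneg _) (norm_nonneg _) (norm_nonneg _) hncv hlb hnau)
    have t6 : ‖(⟪ftil x v h, ibar x v⟫ : ℝ) • (itil x u h - itil x v h)‖
        ≤ ((C₁ + 1/5) * ‖i x‖) * (11/10 * ‖i x‖) * (L * ‖u - v‖) :=
      le_trans (aux_smul_inner _ _ _)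
        (aux_mul3 (norm_nonneg _) (norm_nonneg _) (norm_nonneg _) hncv hnbv hla)
    rw [key]
    refine le_trans (norm_sub_le _ _) ?_
    have A1 := norm_add_le ((⟪itil x u h - itil x v h, ibar x u⟫ : ℝ) • ftil x u h
        + (⟪itil x v h, ibar x u - ibar x v⟫ : ℝ) • ftil x u h)
        ((⟪itil x v h, ibar x v⟫ : ℝ) • (ftil x u h - ftil x v h))
    have A2 := norm_add_le ((⟪itil x u h - itil x v h, ibar x u⟫ : ℝ) • ftil x u h)
        ((⟪itil x v h, ibar x u - ibar x v⟫ : ℝ) • ftil x u h)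
    have A3 := norm_add_le ((⟪ftil x u h - ftil x v h, ibar x u⟫ : ℝ) • itil x u h
        + (⟪ftil x v h, ibar x u - ibar x v⟫ : ℝ) • itil x u h)
        ((⟪ftil x v h, ibar x v⟫ : ℝ) • (itil x u h - itil x v h))
    have A4 := norm_add_le ((⟪ftil x u h - ftil x v h, ibar x u⟫ : ℝ) • itil x u h)
        ((⟪ftil x v h, ibar x u - ibar x v⟫ : ℝ) • itil x u h)
    nlinarith [hm]
  -- Lipschitz bound for the denominator
  have hDlip : ∀ u v : EuclideanSpace ℝ (Fin d),
      ‖u - x‖ ≤ ‖i x‖ / R' → ‖v - x‖ ≤ ‖i x‖ / R' →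
      |(⟪ihat x u h, ibrev x u h⟫ : ℝ) - ⟪ihat x v h, ibrev x v h⟫|
        ≤ 12/5 * (L * (‖i x‖ * ‖u - v‖)) := by
    intro u v hu hv
    have hnpu : ‖ihat x u h‖ ≤ 6/5 * ‖i x‖ := by
      have := aux_norm_le (hclose ihat i (hihat x hx) u hu); linarith
    have hnpv : ‖ihat x v h‖ ≤ 6/5 * ‖i x‖ := by
      have := aux_norm_le (hclose ihat i (hihat x hx) v hv); linarith
    have hnqu : ‖ibrev x u h‖ ≤ 6/5 * ‖i x‖ := by
      have := aux_norm_le (hclose ibrev i (hibrev x hx) u hu); linarith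
    have hlp : ‖ihat x u h - ihat x v h‖ ≤ L * ‖u - v‖ := hlip2 ihat i (hihat x hx) u v hu hv
    have hlq : ‖ibrev x u h - ibrev x v h‖ ≤ L * ‖u - v‖ :=
      hlip2 ibrev i (hibrev x hx) u v hu hv
    have key : (⟪ihat x u h, ibrev x u h⟫ : ℝ) - ⟪ihat x v h, ibrev x v h⟫
        = ⟪ihat x u h - ihat x v h, ibrev x u h⟫ + ⟪ihat x v h, ibrev x u h - ibrev x v h⟫ := by
      simp only [inner_sub_left, inner_sub_right]
      ring
    rw [key]
    have e1 : |(⟪ihat x u h - ihat x v h, ibrev x u h⟫ : ℝ)| ≤ (L * ‖u - v‖) * (6/5 * ‖i x‖) :=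
      le_trans (abs_real_inner_le_norm _ _)
        (mul_le_mul hlp hnqu (norm_nonneg _) (mul_nonneg hL.le (norm_nonneg _)))
    have e2 : |(⟪ihat x v h, ibrev x u h - ibrev x v h⟫ : ℝ)| ≤ (6/5 * ‖i x‖) * (L * ‖u - v‖) :=
      le_trans (abs_real_inner_le_norm _ _)
        (mul_le_mul hnpv hlq (norm_nonneg _) (by positivity))
    refine le_trans (abs_add_le _ _) ?_
    nlinarith
  -- the map sends the ball into itself
  have hself : ∀ u : EuclideanSpace ℝ (Fin d), ‖u - x‖ ≤ ‖i x‖ / R' →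
      ‖Φ u - x‖ ≤ ‖i x‖ / R' := by
    intro u hu
    have hDu := hD u hu
    have hNu := hN u hu
    have hDupos : 0 < (⟪ihat x u h, ibrev x u h⟫ : ℝ) := lt_of_lt_of_le hm2 hDu
    have hΦeq : Φ u - x = (h / ⟪ihat x u h, ibrev x u h⟫) •
        ((⟪itil x u h, ibar x u⟫ : ℝ) • ftil x u h
          - (⟪ftil x u h, ibar x u⟫ : ℝ) • itil x u h) := by
      simp only [hΦdef]
      abel
    rw [hΦeq, norm_smul, Real.norm_eq_abs, abs_of_nonneg (div_nonneg h0 hDupos.le)]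
    have step1 : h / (⟪ihat x u h, ibrev x u h⟫ : ℝ) ≤ h / (14/25 * ‖i x‖^2) :=
      div_le_div_of_nonneg_left h0 hm2 hDu
    calc h / (⟪ihat x u h, ibrev x u h⟫ : ℝ) *
          ‖(⟪itil x u h, ibar x u⟫ : ℝ) • ftil x u h
            - (⟪ftil x u h, ibar x u⟫ : ℝ) • itil x u h‖
        ≤ h / (14/25 * ‖i x‖^2) * ((41/25 * C₁ + 66/125) * ‖i x‖^3) :=
          mul_le_mul step1 hNu (norm_nonneg _) (div_nonneg h0 hm2.le)
      _ ≤ ‖i x‖ / R' := by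
          rw [div_mul_eq_mul_div, div_le_div_iff₀ hm2 hR'pos]
          have key : (0:ℝ) < (1 - h * (6 * (C₁ + 1/5) * R')) * ‖i x‖^3 :=
            mul_pos (by linarith) (pow_pos hm 3)
          nlinarith [mul_nonneg (mul_nonneg (mul_nonneg h0 hR'pos.le) hC₁.le)
            (pow_pos hm 3).le, mul_nonneg (mul_nonneg h0 hR'pos.le) (pow_pos hm 3).le]
  -- contraction estimate
  have hcontr : ∀ u v : EuclideanSpace ℝ (Fin d),
      ‖u - x‖ ≤ ‖i x‖ / R' → ‖v - x‖ ≤ ‖i x‖ / R' →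
      ‖Φ u - Φ v‖ ≤ (h * ((36 * (C₁ + 1/5) + 6) * L)) * ‖u - v‖ := by
    intro u v hu hv
    have hDu := hD u hu
    have hDv := hD v hv
    have hDupos : 0 < (⟪ihat x u h, ibrev x u h⟫ : ℝ) := lt_of_lt_of_le hm2 hDu
    have hDvpos : 0 < (⟪ihat x v h, ibrev x v h⟫ : ℝ) := lt_of_lt_of_le hm2 hDv
    have hNv := hN v hv
    have hNd := hNlip u v hu hv
    have hDd := hDlip u v hu hv
    have hΦd : Φ u - Φ v = (h / ⟪ihat x u h, ibrev x u h⟫) •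
        (((⟪itil x u h, ibar x u⟫ : ℝ) • ftil x u h
            - (⟪ftil x u h, ibar x u⟫ : ℝ) • itil x u h)
          - ((⟪itil x v h, ibar x v⟫ : ℝ) • ftil x v h
            - (⟪ftil x v h, ibar x v⟫ : ℝ) • itil x v h))
        + ((h / ⟪ihat x u h, ibrev x u h⟫) - (h / ⟪ihat x v h, ibrev x v h⟫)) •
          ((⟪itil x v h, ibar x v⟫ : ℝ) • ftil x v h
            - (⟪ftil x v h, ibar x v⟫ : ℝ) • itil x v h) := by
      simp only [hΦdef]
      module
    rw [hΦd]
    refine le_trans (norm_add_le _ _) ?_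
    rw [norm_smul, norm_smul, Real.norm_eq_abs, Real.norm_eq_abs,
      abs_of_nonneg (div_nonneg h0 hDupos.le)]
    have e2 : |h / (⟪ihat x u h, ibrev x u h⟫ : ℝ) - h / ⟪ihat x v h, ibrev x v h⟫|
        = h * |(⟪ihat x u h, ibrev x u h⟫ : ℝ) - ⟪ihat x v h, ibrev x v h⟫|
          / ((⟪ihat x u h, ibrev x u h⟫ : ℝ) * ⟪ihat x v h, ibrev x v h⟫) := by
      rw [div_sub_div _ _ (ne_of_gt hDupos) (ne_of_gt hDvpos)]
      rw [abs_div, abs_of_pos (mul_pos hDupos hDvpos)]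
      congr 1
      rw [show h * (⟪ihat x v h, ibrev x v h⟫ : ℝ) - (⟪ihat x u h, ibrev x u h⟫ : ℝ) * h
        = h * ((⟪ihat x v h, ibrev x v h⟫ : ℝ) - ⟪ihat x u h, ibrev x u h⟫) by ring]
      rw [abs_mul, abs_of_nonneg h0, abs_sub_comm]
    rw [e2]
    have P1 : h / (⟪ihat x u h, ibrev x u h⟫ : ℝ) *
        ‖((⟪itil x u h, ibar x u⟫ : ℝ) • ftil x u h
            - (⟪ftil x u h, ibar x u⟫ : ℝ) • itil x u h)
          - ((⟪itil x v h, ibar x v⟫ : ℝ) • ftil x v h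
            - (⟪ftil x v h, ibar x v⟫ : ℝ) • itil x v h)‖
        ≤ h / (14/25 * ‖i x‖^2) *
          ((23/5 * (C₁ + 1/5) + 66/25) * (L * (‖i x‖^2 * ‖u - v‖))) :=
      mul_le_mul (div_le_div_of_nonneg_left h0 hm2 hDu) hNd
        (norm_nonneg _) (div_nonneg h0 hm2.le)
    have P2 : h * |(⟪ihat x u h, ibrev x u h⟫ : ℝ) - ⟪ihat x v h, ibrev x v h⟫|
          / ((⟪ihat x u h, ibrev x u h⟫ : ℝ) * ⟪ihat x v h, ibrev x v h⟫) *
          ‖(⟪itil x v h, ibar x v⟫ : ℝ) • ftil x v h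
            - (⟪ftil x v h, ibar x v⟫ : ℝ) • itil x v h‖
        ≤ h * (12/5 * (L * (‖i x‖ * ‖u - v‖))) / ((14/25 * ‖i x‖^2) * (14/25 * ‖i x‖^2)) *
          ((41/25 * C₁ + 66/125) * ‖i x‖^3) := by
      have hnum : h * |(⟪ihat x u h, ibrev x u h⟫ : ℝ) - ⟪ihat x v h, ibrev x v h⟫|
          ≤ h * (12/5 * (L * (‖i x‖ * ‖u - v‖))) := mul_le_mul_of_nonneg_left hDd h0
      have hden : (14/25 * ‖i x‖^2) * (14/25 * ‖i x‖^2)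
          ≤ (⟪ihat x u h, ibrev x u h⟫ : ℝ) * ⟪ihat x v h, ibrev x v h⟫ :=
        mul_le_mul hDu hDv hm2.le hDupos.le
      have hcnn : 0 ≤ h * (12/5 * (L * (‖i x‖ * ‖u - v‖))) :=
        mul_nonneg h0 (mul_nonneg (by norm_num)
          (mul_nonneg hL.le (mul_nonneg (norm_nonneg _) (norm_nonneg _))))
      refine mul_le_mul ?_ hNv (norm_nonneg _)
        (div_nonneg hcnn (mul_pos hm2 hm2).le)
      exact div_le_div₀ hcnn hnum (mul_pos hm2 hm2) hden
    have hmne : ‖i x‖ ≠ 0 := hm.ne'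
    have E1 : h / (14/25 * ‖i x‖^2) * ((23/5 * (C₁ + 1/5) + 66/25) * (L * (‖i x‖^2 * ‖u - v‖)))
        = (h * L * ‖u - v‖) * (25/14 * (23/5 * (C₁ + 1/5) + 66/25)) := by
      field_simp
    have E2 : h * (12/5 * (L * (‖i x‖ * ‖u - v‖))) /
          ((14/25 * ‖i x‖^2) * (14/25 * ‖i x‖^2)) * ((41/25 * C₁ + 66/125) * ‖i x‖^3)
        = (h * L * ‖u - v‖) * (375/49 * (41/25 * C₁ + 66/125)) := by
      field_simp
      ring
    have hconst : 25/14 * (23/5 * (C₁ + 1/5) + 66/25) + 375/49 * (41/25 * C₁ + 66/125)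
        ≤ 36 * (C₁ + 1/5) + 6 := by linarith
    have hfac : (h * L * ‖u - v‖) * (25/14 * (23/5 * (C₁ + 1/5) + 66/25))
        + (h * L * ‖u - v‖) * (375/49 * (41/25 * C₁ + 66/125))
        ≤ (h * L * ‖u - v‖) * (36 * (C₁ + 1/5) + 6) := by
      rw [← mul_add]
      exact mul_le_mul_of_nonneg_left hconst
        (mul_nonneg (mul_nonneg h0 hL.le) (norm_nonneg _))
    have Ef : (h * L * ‖u - v‖) * (36 * (C₁ + 1/5) + 6)
        = h * ((36 * (C₁ + 1/5) + 6) * L) * ‖u - v‖ := by ring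
    linarith
  -- Banach fixed point on the closed ball
  have hr0 : 0 ≤ ‖i x‖ / R' := div_nonneg (norm_nonneg _) hR'pos.le
  have hxS : x ∈ Metric.closedBall x (‖i x‖ / R') := Metric.mem_closedBall_self hr0
  haveI : Nonempty (Metric.closedBall x (‖i x‖ / R')) := ⟨⟨x, hxS⟩⟩
  haveI : CompleteSpace (Metric.closedBall x (‖i x‖ / R')) :=
    Metric.isClosed_closedBall.completeSpace_coe
  have hmem : ∀ u : EuclideanSpace ℝ (Fin d),
      u ∈ Metric.closedBall x (‖i x‖ / R') ↔ ‖u - x‖ ≤ ‖i x‖ / R' := by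
    intro u
    rw [Metric.mem_closedBall, dist_eq_norm]
  set k : ℝ := h * ((36 * (C₁ + 1/5) + 6) * L) with hk
  have hk0 : 0 ≤ k := mul_nonneg h0 (mul_pos (by linarith) hL).le
  have hk1 : k < 1 := hh36'
  set ψ : Metric.closedBall x (‖i x‖ / R') → Metric.closedBall x (‖i x‖ / R') :=
    fun u => ⟨Φ u.1, (hmem _).mpr (hself u.1 ((hmem _).mp u.2))⟩ with hψdef
  have hψ : ContractingWith (Real.toNNReal k) ψ := by
    refine ⟨Real.toNNReal_lt_one.mpr hk1, LipschitzWith.of_dist_le_mul fun p q => ?_⟩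
    have hlip := hcontr p.1 q.1 ((hmem _).mp p.2) ((hmem _).mp q.2)
    calc dist (ψ p) (ψ q) = ‖Φ p.1 - Φ q.1‖ := by
          rw [Subtype.dist_eq, dist_eq_norm]
      _ ≤ k * ‖p.1 - q.1‖ := hlip
      _ = Real.toNNReal k * dist p q := by
          rw [Subtype.dist_eq, dist_eq_norm, Real.coe_toNNReal k hk0]
  set z : Metric.closedBall x (‖i x‖ / R') := ContractingWith.fixedPoint ψ hψ with hz
  have hzfix : Φ z.1 = z.1 := by
    have hfp := hψ.fixedPoint_isFixedPt
    rw [← hz] at hfp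
    exact congrArg Subtype.val hfp
  have hzb : ‖z.1 - x‖ ≤ ‖i x‖ / R' := (hmem _).mp z.2
  refine ⟨z.1, ⟨hzb, fun _ => hzfix.symm, fun hc => absurd hc hiz⟩, ?_⟩
  rintro y ⟨hyball, hyDG, -⟩
  have hyf : y = Φ y := hyDG hiz
  have hyb : ‖y - x‖ ≤ ‖i x‖ / R' := hyball
  have hd := hcontr y z.1 hyb hzb
  rw [← hyf, hzfix] at hd
  have h5 : ‖y - z.1‖ = 0 :=
    le_antisymm (by nlinarith [norm_nonneg (y - z.1)]) (norm_nonneg _)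
  exact sub_eq_zero.mp (norm_eq_zero.mp h5)
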